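/- Let F be a field of prime characteristic p and let a ∈ F. Then the polynomial f = X^p - X - a ∈ F[X] is either irreducible over F or has a root in F. -/

import Mathlib

open Polynomial

theorem artin_schreier_irreducible_or_root {F : Type*} [Field F] (p : ℕ) (hp : p.Prime)
    [CharP F p] (a : F) :
    Irreducible (X ^ p - X - C a : F[X]) ∨ ∃ x : F, x ^ p - x = a := by
  classical
  haveI := Fact.mk hp
  by_cases h : ∃ x : F, x ^ p - x = a
  · exact Or.inr h
  left
  have hp2 : 2 ≤ p := hp.two_le
  set f : F[X] := X ^ p - X - C a with hf
  -- f is monic of degree p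
  have hfm : f.Monic := by
    have : f = X ^ p - (X + C a) := by ring
    rw [this]
    have hdeg : (X + C a : F[X]).degree < (p : ℕ) := by
      rw [degree_X_add_C]
      exact_mod_cast by omega
    exact monic_X_pow_sub hdeg
  have hfd : f.natDegree = p := by
    have h1 : (X ^ p - X : F[X]).natDegree = p :=
      FiniteField.X_pow_card_sub_X_natDegree_eq F (by omega)
    rw [hf, natDegree_sub_C, h1]
  have hf0 : f ≠ 0 := hfm.ne_zero
  -- splitting field and a root α
  set K := f.SplittingField with hK
  have hsp : Splits (f.map (algebraMap F K)) := SplittingField.splits f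
  obtain ⟨α, hα⟩ : ∃ α, eval₂ (algebraMap F K) α f = 0 := by
    obtain ⟨α, hα⟩ := hsp.exists_eval_eq_zero
      (by rw [degree_map, degree_eq_natDegree hf0, hfd]; exact_mod_cast (by omega : p ≠ 0))
    exact ⟨α, by rwa [eval_map] at hα⟩
  haveI : CharP K p := charP_of_injective_algebraMap (algebraMap F K).injective p
  have hαint : IsIntegral F α := ⟨f, hfm, hα⟩
  set g : F[X] := minpoly F α with hg
  have hgm : g.Monic := minpoly.monic hαint
  have hgdvd : g ∣ f := minpoly.dvd F α (by rwa [aeval_def])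
  set d := g.natDegree with hd
  have hd1 : 0 < d := minpoly.natDegree_pos hαint
  have hdle : d ≤ p := hfd ▸ natDegree_le_of_dvd hgdvd hf0
  -- α satisfies α ^ p - α = a'
  have hαroot : α ^ p - α = algebraMap F K a := by
    have := hα
    simp only [hf, eval₂_sub, eval₂_X_pow, eval₂_X, eval₂_C] at this
    linear_combination this
  -- key: d = p
  have hdp : d = p := by
    by_contra hne
    have hdlt : d < p := lt_of_le_of_ne hdle hne
    set gK := g.map (algebraMap F K) with hgK
    have hgKm : gK.Monic := hgm.map _
    have hgsp : Splits (g.map (algebraMap F K)) :=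
      hsp.of_dvd (Polynomial.map_ne_zero hf0) (Polynomial.map_dvd _ hgdvd)
    have hgKsp : gK.Splits := hgsp
    have hcard : Multiset.card gK.roots = d := by
      rw [← hgKsp.natDegree_eq_card_roots, hgK, natDegree_map]
    -- every root β of gK satisfies β ^ p - β = a'
    have hroots : ∀ β ∈ gK.roots, β ^ p - β = algebraMap F K a := by
      intro β hβ
      have hβg : aeval β g = 0 := by
        have := isRoot_of_mem_roots hβ
        rwa [IsRoot, eval_map, ← aeval_def] at this
      obtain ⟨q, hq⟩ := hgdvd
      have hβf : aeval β f = 0 := by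
        have := congrArg (aeval β) hq
        rw [map_mul, hβg, zero_mul] at this
        exact this
      simp only [hf, map_sub, aeval_X_pow, aeval_X, aeval_C] at hβf
      linear_combination hβf
    have hfix : ∀ β ∈ gK.roots, (β - α) ^ p = β - α := by
      intro β hβ
      have h1 : β ^ p = β + algebraMap F K a := by linear_combination hroots β hβ
      have h2 : α ^ p = α + algebraMap F K a := by linear_combination hαroot
      rw [sub_pow_char, h1, h2]; ring
    set t : K := (gK.roots.map (fun β => β - α)).sum with ht
    have hsum : gK.roots.sum = (d : K) * α + t := by
      have e1 : gK.roots.map (fun β => α + (β - α)) = gK.roots := by simp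
      have e2 : gK.roots.sum
          = (gK.roots.map (fun _ => α)).sum + (gK.roots.map (fun β => β - α)).sum := by
        rw [← Multiset.sum_map_add, e1]
      rw [e2, Multiset.map_const', Multiset.sum_replicate, hcard, ht, nsmul_eq_mul]
    have htfix : t ^ p = t := by
      have : (frobenius K p) t = t := by
        rw [map_multiset_sum, Multiset.map_map]
        congr 1
        refine Multiset.map_congr rfl ?_
        intro β hβ
        simpa [frobenius_def] using hfix β hβ
      rwa [frobenius_def] at this
    -- t is in the prime field, hence in the image of F
    obtain ⟨z, hz⟩ : ∃ z : F, t = algebraMap F K z := by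
      set ψ : ZMod p →+* K := ZMod.castHom dvd_rfl K with hψ
      have hψroot : ∀ z : ZMod p, (ψ z) ^ p = ψ z := by
        intro z
        rw [← map_pow, ZMod.pow_card]
      have hq0 : (X ^ p - X : K[X]) ≠ 0 := FiniteField.X_pow_card_sub_X_ne_zero K (by omega)
      have hqd : (X ^ p - X : K[X]).natDegree = p :=
        FiniteField.X_pow_card_sub_X_natDegree_eq K (by omega)
      have hmem : ∀ x : K, x ^ p = x → x ∈ (X ^ p - X : K[X]).roots.toFinset := by
        intro x hx
        rw [Multiset.mem_toFinset, mem_roots hq0]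
        simp [IsRoot, sub_eq_zero, hx]
      by_cases htS : t ∈ Finset.univ.image ψ
      · obtain ⟨z, _, hz⟩ := Finset.mem_image.mp htS
        refine ⟨ZMod.castHom dvd_rfl F z, ?_⟩
        have heq : (algebraMap F K).comp (ZMod.castHom dvd_rfl F) = ψ := RingHom.ext_zmod _ _
        rw [← hz, ← heq]; rfl
      · exfalso
        have hsub : insert t (Finset.univ.image ψ) ⊆ (X ^ p - X : K[X]).roots.toFinset := by
          intro x hx
          rcases Finset.mem_insert.mp hx with rfl | hx
          · exact hmem _ htfix
          · obtain ⟨z, _, rfl⟩ := Finset.mem_image.mp hx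
            exact hmem _ (hψroot z)
        have h1 : (insert t (Finset.univ.image ψ)).card = p + 1 := by
          rw [Finset.card_insert_of_notMem htS,
            Finset.card_image_of_injective _ ψ.injective, Finset.card_univ, ZMod.card]
        have h2 : (X ^ p - X : K[X]).roots.toFinset.card ≤ p := by
          calc (X ^ p - X : K[X]).roots.toFinset.card
              ≤ Multiset.card (X ^ p - X : K[X]).roots := (X ^ p - X : K[X]).roots.toFinset_card_le
            _ ≤ (X ^ p - X : K[X]).natDegree := (X ^ p - X : K[X]).card_roots'
            _ = p := hqd
        have := Finset.card_le_card hsub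
        omega
    -- extract α ∈ F from the next coefficient of g
    have hnext : algebraMap F K g.nextCoeff = -((d : K) * α + t) := by
      have h1 : gK.nextCoeff = -gK.roots.sum :=
        hgKsp.nextCoeff_eq_neg_sum_roots_of_monic hgKm
      rw [← hsum, ← h1, hgK, nextCoeff_map (algebraMap F K).injective]
    have hdF : ((d : ℕ) : F) ≠ 0 := by
      rw [Ne, CharP.cast_eq_zero_iff F p]
      intro hdvd
      exact absurd (Nat.le_of_dvd hd1 hdvd) (by omega)
    set x : F := (-g.nextCoeff - z) / ((d : ℕ) : F) with hx
    have h4 : algebraMap F K ((d : ℕ) : F) ≠ 0 := by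
      rw [Ne, _root_.map_eq_zero]; exact hdF
    have h1 : α * algebraMap F K ((d : ℕ) : F) = algebraMap F K (-g.nextCoeff - z) := by
      have hcast : algebraMap F K ((d : ℕ) : F) = ((d : ℕ) : K) := map_natCast _ d
      rw [map_sub, map_neg, hnext, hz, hcast]
      ring
    have hαx : α = algebraMap F K x := by
      have h5 : x * ((d : ℕ) : F) = -g.nextCoeff - z := div_mul_cancel₀ _ hdF
      have h6 : algebraMap F K x * algebraMap F K ((d : ℕ) : F)
          = α * algebraMap F K ((d : ℕ) : F) := by
        rw [← map_mul, h5, h1]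
      exact (mul_right_cancel₀ h4 h6).symm
    apply h
    refine ⟨x, ?_⟩
    have : algebraMap F K (x ^ p - x) = algebraMap F K a := by
      rw [map_sub, map_pow, ← hαx, hαroot]
    exact (algebraMap F K).injective this
  -- conclude f = g, hence irreducible
  have hfg : f = g := eq_of_monic_of_dvd_of_natDegree_le hgm hfm hgdvd (by omega)
  exact hfg ▸ minpoly.irreducible hαint
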